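/- arXiv:2403.18429 — 3 statements merged into one kernel-verified Lean document; each statement's English description precedes it below -/
import Mathlib

section
/- There exists a finite simple connected graph G with at least two vertices such that μ(G) > max over all pairs of adjacent vertices v_i ~ v_j of G of 2 + √(3·(m_i² + m_j²) − 2·m_i·m_j − 4·(d_i + d_j) + 4). (This disproves conjectured edge-maximum bound 43 of Brankov, Hansen and Stevanović.) -/
noncomputable section

open Finset

/-- The degree of a vertex, as a real number. -/
def degR {V : Type*} [Fintype V] (G : SimpleGraph V) (v : V) : ℝ :=
  letI := Classical.decRel G.Adj
  (G.degree v : ℝ)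

/-- The average degree of the neighbours of a vertex, as a real number:
`m_v = (∑_{u ~ v} d_u) / d_v`. -/
def avgDegR {V : Type*} [Fintype V] (G : SimpleGraph V) (v : V) : ℝ :=
  letI := Classical.decRel G.Adj
  (∑ u ∈ G.neighborFinset v, (G.degree u : ℝ)) / (G.degree v : ℝ)

/-- The largest eigenvalue of the Laplacian matrix `L = D - A` of a finite graph. -/
def lapSpecRad {V : Type*} [Fintype V] [DecidableEq V] [Nonempty V]
    (G : SimpleGraph V) : ℝ :=
  letI := Classical.decRel G.Adj
  ⨆ i, (SimpleGraph.posSemidef_lapMatrix ℝ G).isHermitian.eigenvalues i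

open Matrix

/-! ### Rayleigh quotient lower bound for the top eigenvalue -/

lemma rayleigh_aux {n : Type*} [Fintype n] [DecidableEq n] [Nonempty n]
    {A : Matrix n n ℝ} (hA : A.IsHermitian) (x : n → ℝ) :
    x ⬝ᵥ A.mulVec x ≤ (⨆ i, hA.eigenvalues i) * (x ⬝ᵥ x) := by
  have hbdd : BddAbove (Set.range hA.eigenvalues) := Set.Finite.bddAbove (Set.finite_range _)
  set b := hA.eigenvectorBasis with hb
  set x' : EuclideanSpace ℝ n := WithLp.toLp 2 x with hx'
  set y' : EuclideanSpace ℝ n := WithLp.toLp 2 (A.mulVec x) with hy'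
  have hAT : Aᵀ = A := by
    rw [← Matrix.conjTranspose_eq_transpose_of_trivial]; exact hA
  have hinner : ∀ (u v : EuclideanSpace ℝ n), (inner ℝ u v : ℝ) = (u : n → ℝ) ⬝ᵥ (v : n → ℝ) := by
    intro u v
    simp [PiLp.inner_apply, dotProduct, mul_comm]
  have key : ∀ i, b.repr y' i = hA.eigenvalues i * b.repr x' i := by
    intro i
    rw [OrthonormalBasis.repr_apply_apply, OrthonormalBasis.repr_apply_apply, hinner, hinner]
    show (⇑(b i)) ⬝ᵥ (A *ᵥ x) = _
    rw [dotProduct_mulVec, ← Matrix.mulVec_transpose, hAT,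
      hA.mulVec_eigenvectorBasis]
    simp only [smul_dotProduct]
    rfl
  have h1 : x ⬝ᵥ A.mulVec x = ∑ i, hA.eigenvalues i * (b.repr x' i)^2 := by
    rw [show x ⬝ᵥ A.mulVec x = (inner ℝ x' y' : ℝ) from (hinner x' y').symm,
      ← b.repr.inner_map_map x' y', PiLp.inner_apply]
    simp only [RCLike.inner_apply, starRingEnd_apply, star_trivial, key]
    congr 1; ext i; ring
  have h2 : x ⬝ᵥ x = ∑ i, (b.repr x' i)^2 := by
    rw [show x ⬝ᵥ x = (inner ℝ x' x' : ℝ) from (hinner x' x').symm,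
      ← b.repr.inner_map_map x' x', PiLp.inner_apply]
    simp only [RCLike.inner_apply, starRingEnd_apply, star_trivial, sq]
  rw [h1, h2, Finset.mul_sum]
  apply Finset.sum_le_sum
  intro i _
  have h3 : hA.eigenvalues i ≤ ⨆ j, hA.eigenvalues j := le_ciSup hbdd i
  nlinarith [sq_nonneg (b.repr x' i)]

lemma lapSpecRad_lower {V : Type*} [Fintype V] [DecidableEq V] [Nonempty V]
    (G : SimpleGraph V) [inst : DecidableRel G.Adj] (x : V → ℝ) :
    x ⬝ᵥ (SimpleGraph.lapMatrix ℝ G).mulVec x ≤ lapSpecRad G * (x ⬝ᵥ x) := by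
  have hE : (Classical.decRel G.Adj) = inst := by
    funext a b; exact Subsingleton.elim _ _
  subst hE
  exact rayleigh_aux _ x

/-! ### The counterexample graph: a spider with 9 legs of length 2 -/

def spiderRel (i j : Fin 19) : Prop :=
  (i = 0 ∧ 1 ≤ (j : ℕ) ∧ (j : ℕ) ≤ 9) ∨ ((j : ℕ) = (i : ℕ) + 9 ∧ 1 ≤ (i : ℕ) ∧ (i : ℕ) ≤ 9)

instance : DecidableRel spiderRel := fun i j => by unfold spiderRel; infer_instance

def spider : SimpleGraph (Fin 19) := SimpleGraph.fromRel spiderRel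

instance : DecidableRel spider.Adj := fun i j =>
  decidable_of_iff _ (SimpleGraph.fromRel_adj spiderRel i j).symm

lemma spider_connected : spider.Connected := by
  rw [SimpleGraph.connected_iff]
  refine ⟨fun u v => ?_, inferInstance⟩
  have h : ∀ w : Fin 19, spider.Reachable 0 w := by
    intro w
    rcases Nat.lt_or_ge (w : ℕ) 1 with h1 | h1
    · have : w = 0 := by ext; simpa using Nat.lt_one_iff.mp h1
      subst this; rfl
    rcases Nat.lt_or_ge (w : ℕ) 10 with h2 | h2
    · refine SimpleGraph.Adj.reachable ?_
      refine (SimpleGraph.fromRel_adj ..).mpr ⟨?_, Or.inl (Or.inl ⟨rfl, h1, by omega⟩)⟩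
      intro hh; rw [← hh] at h1; simp at h1
    · have hlt : (w : ℕ) < 19 := w.isLt
      set m : Fin 19 := ⟨(w : ℕ) - 9, by omega⟩ with hm
      have a1 : spider.Adj 0 m := by
        refine (SimpleGraph.fromRel_adj ..).mpr
          ⟨?_, Or.inl (Or.inl ⟨rfl, by simp [hm]; omega, by simp [hm]; omega⟩)⟩
        intro hh
        have : (0 : ℕ) = (w : ℕ) - 9 := congrArg Fin.val hh
        omega
      have a2 : spider.Adj m w := by
        refine (SimpleGraph.fromRel_adj ..).mpr
          ⟨?_, Or.inl (Or.inr ⟨by simp [hm]; omega, by simp [hm]; omega, by simp [hm]; omega⟩)⟩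
        intro hh
        have : (w : ℕ) - 9 = (w : ℕ) := congrArg Fin.val hh
        omega
      exact a1.reachable.trans a2.reachable
  exact (h u).symm.trans (h v)

lemma spider_key : ∀ i j : Fin 19, spider.Adj i j →
    (spider.degree i, ∑ u ∈ spider.neighborFinset i, spider.degree u,
     spider.degree j, ∑ u ∈ spider.neighborFinset j, spider.degree u) ∈
    ({(9,18,2,10),(2,10,9,18),(2,10,1,2),(1,2,2,10)} : Finset (ℕ×ℕ×ℕ×ℕ)) := by decide

/-! ### The test vector and quadratic form values -/

def xZ : Fin 19 → ℤ := fun i => if i = 0 then -800 else if (i : ℕ) ≤ 9 then 100 else -11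

def xR : Fin 19 → ℝ := fun i => ((xZ i : ℤ) : ℝ)

lemma lap_entry (i j : Fin 19) :
    (SimpleGraph.lapMatrix ℝ spider) i j = ((SimpleGraph.lapMatrix ℤ spider i j : ℤ) : ℝ) := by
  simp only [SimpleGraph.lapMatrix, Matrix.sub_apply, SimpleGraph.degMatrix,
    SimpleGraph.adjMatrix_apply, Matrix.diagonal_apply]
  split_ifs <;> push_cast <;> ring

lemma quadZ : xZ ⬝ᵥ ((SimpleGraph.lapMatrix ℤ spider).mulVec xZ) = 7400889 := by decide

lemma normZ : xZ ⬝ᵥ xZ = 731089 := by decide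

lemma quadR : xR ⬝ᵥ ((SimpleGraph.lapMatrix ℝ spider).mulVec xR) = 7400889 := by
  have : xR ⬝ᵥ ((SimpleGraph.lapMatrix ℝ spider).mulVec xR)
      = ((xZ ⬝ᵥ ((SimpleGraph.lapMatrix ℤ spider).mulVec xZ) : ℤ) : ℝ) := by
    simp only [dotProduct, Matrix.mulVec, lap_entry, xR]
    push_cast
    rfl
  rw [this, quadZ]; norm_num

lemma normR : xR ⬝ᵥ xR = 731089 := by
  have : xR ⬝ᵥ xR = ((xZ ⬝ᵥ xZ : ℤ) : ℝ) := by
    simp only [dotProduct, xR]; push_cast; rfl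
  rw [this, normZ]; norm_num

/-! ### Instance-independence plumbing for `degR` and `avgDegR` -/

lemma degree_irrel {V : Type*} (G : SimpleGraph V) (v : V)
    (h1 h2 : Fintype (G.neighborSet v)) :
    @SimpleGraph.degree V G v h1 = @SimpleGraph.degree V G v h2 := by
  congr!

lemma neighborFinset_irrel {V : Type*} (G : SimpleGraph V) (v : V)
    (h1 h2 : Fintype (G.neighborSet v)) :
    @SimpleGraph.neighborFinset V G v h1 = @SimpleGraph.neighborFinset V G v h2 := by
  congr!

lemma degR_spider (v : Fin 19) : degR spider v = (spider.degree v : ℝ) := by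
  unfold degR
  exact congrArg (fun n : ℕ => (n : ℝ)) (degree_irrel spider v _ _)

lemma avgDegR_spider (v : Fin 19) :
    avgDegR spider v
      = ((∑ u ∈ spider.neighborFinset v, spider.degree u : ℕ) : ℝ) / (spider.degree v : ℝ) := by
  unfold avgDegR
  rw [neighborFinset_irrel spider v _ _]
  push_cast
  congr!

/-! ### Main theorem -/

/-- There exists a finite simple connected graph `G` with at least two vertices whose
Laplacian spectral radius exceeds the conjectured edge-maximum bound. -/
theorem exists_counterexample_bound43 :
    ∃ (V : Type) (_ : Fintype V) (_ : DecidableEq V) (_ : Nonempty V)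
      (G : SimpleGraph V), G.Connected ∧ 2 ≤ Fintype.card V ∧
      ∀ i j : V, G.Adj i j →
        (fun di mi dj mj => 2 + Real.sqrt (3 * (mi ^ 2 + mj ^ 2) - 2 * mi * mj - 4 * (di + dj) + 4))
          (degR G i) (avgDegR G i) (degR G j) (avgDegR G j) < lapSpecRad G := by
  refine ⟨Fin 19, inferInstance, inferInstance, inferInstance, spider,
    spider_connected, by norm_num, ?_⟩
  intro i j hadj
  have hlow : (9.69 : ℝ) < lapSpecRad spider := by
    have h := lapSpecRad_lower spider xR
    rw [quadR, normR] at h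
    nlinarith [h]
  have hmain : ∀ X : ℝ, X ≤ 59 → 2 + Real.sqrt X < lapSpecRad spider := by
    intro X hX
    have h1 : Real.sqrt X ≤ Real.sqrt 59 := Real.sqrt_le_sqrt hX
    have h2 : Real.sqrt 59 < 7.69 := by
      rw [Real.sqrt_lt' (by norm_num)]
      norm_num
    linarith
  have hcard := spider_key i j hadj
  simp only [Finset.mem_insert, Finset.mem_singleton, Prod.mk.injEq] at hcard
  simp only [degR_spider, avgDegR_spider]
  rcases hcard with ⟨h1, h2, h3, h4⟩ | ⟨h1, h2, h3, h4⟩ | ⟨h1, h2, h3, h4⟩ | ⟨h1, h2, h3, h4⟩ <;>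
    rw [h1, h2, h3, h4] <;>
    exact hmain _ (by norm_num)
end
end

section
/- There exists a finite simple connected graph G with at least two vertices such that μ(G) > max over all pairs of adjacent vertices v_i ~ v_j of G of (2·(m_i² + m_i·m_j + m_j²) − (d_i² + d_j²))/(m_i + m_j). (This disproves conjectured edge-maximum bound 59 of Brankov, Hansen and Stevanović.) -/
noncomputable section

open Finset

open Matrix in
/-- Rayleigh-type lower bound: any Rayleigh quotient is at most the largest eigenvalue. -/
theorem rayleigh_le_iSup_aux59 {n : Type*} [Fintype n] [DecidableEq n] [Nonempty n]
    {A : Matrix n n ℝ} (hA : A.IsHermitian) (x : n → ℝ) :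
    x ⬝ᵥ (A *ᵥ x) ≤ (⨆ i, hA.eigenvalues i) * (x ⬝ᵥ x) := by
  classical
  set U := (hA.eigenvectorUnitary : Matrix n n ℝ) with hUdef
  set y := star U *ᵥ x with hy
  have hxU : vecMul x U = y := by
    funext i
    simp only [hy, vecMul, mulVec, dotProduct, star_apply, star_trivial]
    exact Finset.sum_congr rfl fun j _ => mul_comm _ _
  have hUU : U * star U = 1 := Matrix.mem_unitaryGroup_iff.mp (hA.eigenvectorUnitary).2
  have hXX : x ⬝ᵥ x = y ⬝ᵥ y := by
    calc x ⬝ᵥ x = x ⬝ᵥ ((U * star U) *ᵥ x) := by rw [hUU, one_mulVec]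
    _ = x ⬝ᵥ (U *ᵥ (star U *ᵥ x)) := by rw [← mulVec_mulVec]
    _ = vecMul x U ⬝ᵥ (star U *ᵥ x) := by rw [dotProduct_mulVec]
    _ = y ⬝ᵥ y := by rw [hxU, hy]
  have hquad : x ⬝ᵥ (A *ᵥ x) = ∑ i, hA.eigenvalues i * (y i)^2 := by
    have hsp := hA.spectral_theorem
    calc x ⬝ᵥ (A *ᵥ x)
        = x ⬝ᵥ ((U * Matrix.diagonal (RCLike.ofReal ∘ hA.eigenvalues) * star U) *ᵥ x) := by
          conv_lhs => rw [hsp]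
          rfl
      _ = vecMul x U ⬝ᵥ (Matrix.diagonal (RCLike.ofReal ∘ hA.eigenvalues) *ᵥ (star U *ᵥ x)) := by
          rw [← mulVec_mulVec, ← mulVec_mulVec, dotProduct_mulVec]
      _ = ∑ i, hA.eigenvalues i * (y i)^2 := by
          rw [hxU, ← hy]
          simp only [dotProduct, mulVec_diagonal, Function.comp_apply, RCLike.ofReal_real_eq_id,
            id_eq]
          exact Finset.sum_congr rfl fun i _ => by ring
  rw [hquad, hXX]
  have hsum : y ⬝ᵥ y = ∑ i, (y i)^2 := by
    simp only [dotProduct]; exact Finset.sum_congr rfl fun i _ => (sq (y i)).symm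
  rw [hsum, Finset.mul_sum]
  refine Finset.sum_le_sum fun i _ => ?_
  exact mul_le_mul_of_nonneg_right (le_ciSup (Set.Finite.bddAbove (Set.finite_range _)) i)
    (sq_nonneg _)

/-- Edge list of the counterexample graph. -/
def cexEdges : List (Fin 12 × Fin 12) :=
  [(0,1),(0,5),(0,11),(1,4),(1,8),(2,6),(2,9),(3,7),(3,10),(4,6),(4,7),(4,11),
   (6,8),(8,10),(8,11)]

/-- The counterexample graph on 12 vertices. -/
def Gcex : SimpleGraph (Fin 12) :=
  SimpleGraph.fromRel (fun i j => (i, j) ∈ cexEdges)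

instance GcexDec : DecidableRel Gcex.Adj := fun a b =>
  inferInstanceAs (Decidable (a ≠ b ∧ ((a, b) ∈ cexEdges ∨ (b, a) ∈ cexEdges)))

lemma gcex_inst : Classical.decRel Gcex.Adj = GcexDec := by
  funext a b; exact Subsingleton.elim _ _

/-- Degrees of the vertices of `Gcex`. -/
def dN : Fin 12 → ℕ := ![3,3,2,2,4,1,3,2,4,1,2,3]
/-- Sums of neighbour degrees of the vertices of `Gcex`. -/
def sN : Fin 12 → ℕ := ![7,11,4,4,11,3,10,6,11,2,6,11]

lemma gcex_deg : ∀ v, Gcex.degree v = dN v := by decide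

lemma gcex_sum : ∀ v, (∑ u ∈ Gcex.neighborFinset v, Gcex.degree u) = sN v := by decide

lemma degR_val (v : Fin 12) : degR Gcex v = (dN v : ℝ) := by
  unfold degR
  rw [gcex_inst, gcex_deg]

lemma avgDegR_val (v : Fin 12) : avgDegR Gcex v = (sN v : ℝ) / (dN v : ℝ) := by
  unfold avgDegR
  rw [gcex_inst, ← Nat.cast_sum, gcex_sum, gcex_deg]

lemma dN_pos : ∀ v, 0 < dN v := by decide
lemma sN_pos : ∀ v, 0 < sN v := by decide

/-- Numerator of the edge bound after clearing denominators. -/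
def bndN (i j : Fin 12) : ℤ :=
  2 * ((sN i : ℤ)^2 * (dN j : ℤ)^2 + (sN i : ℤ) * (sN j : ℤ) * (dN i : ℤ) * (dN j : ℤ)
      + (sN j : ℤ)^2 * (dN i : ℤ)^2)
    - ((dN i : ℤ)^2 + (dN j : ℤ)^2) * (dN i : ℤ)^2 * (dN j : ℤ)^2

/-- Denominator of the edge bound after clearing denominators. -/
def bndD (i j : Fin 12) : ℤ :=
  ((sN i : ℤ) * (dN j : ℤ) + (sN j : ℤ) * (dN i : ℤ)) * (dN i : ℤ) * (dN j : ℤ)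

lemma bnd_lt : ∀ i j : Fin 12, Gcex.Adj i j → 99 * bndN i j < 625 * bndD i j := by decide

/-- The integer test vector. -/
def zvec : Fin 12 → ℤ := ![2,-4,1,1,5,0,-3,-1,5,0,-1,-4]

/-- Its real incarnation. -/
def xvec : Fin 12 → ℝ := fun k => ((zvec k : ℤ) : ℝ)

open Matrix in
lemma lap_cast :
    SimpleGraph.lapMatrix ℝ Gcex = (SimpleGraph.lapMatrix ℤ Gcex).map (Int.cast : ℤ → ℝ) := by
  funext i j
  simp only [SimpleGraph.lapMatrix, SimpleGraph.degMatrix, SimpleGraph.adjMatrix,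
    Matrix.sub_apply, Matrix.map_apply, Matrix.diagonal, Matrix.of_apply]
  split_ifs <;> push_cast <;> ring

open Matrix in
lemma quad_int : (∑ x : Fin 12, zvec x * (SimpleGraph.lapMatrix ℤ Gcex *ᵥ zvec) x : ℤ) = 625 := by
  decide

lemma norm_int : (∑ x : Fin 12, zvec x * zvec x : ℤ) = 99 := by decide

open Matrix in
lemma quad_val (d : DecidableRel Gcex.Adj) :
    xvec ⬝ᵥ (@SimpleGraph.lapMatrix (Fin 12) ℝ _ Gcex d _ _ *ᵥ xvec) = 625 := by
  rw [Subsingleton.elim d GcexDec, lap_cast]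
  clear d
  have hmv : (SimpleGraph.lapMatrix ℤ Gcex).map (Int.cast : ℤ → ℝ) *ᵥ xvec
      = fun k => (((SimpleGraph.lapMatrix ℤ Gcex *ᵥ zvec) k : ℤ) : ℝ) := by
    funext k
    simp only [Matrix.mulVec, dotProduct, Matrix.map_apply, xvec]
    push_cast
    rfl
  rw [hmv]
  simp only [dotProduct, xvec]
  rw [show (∑ x : Fin 12, ((zvec x : ℤ) : ℝ) * (((SimpleGraph.lapMatrix ℤ Gcex *ᵥ zvec) x : ℤ) : ℝ))
      = ((∑ x : Fin 12, zvec x * (SimpleGraph.lapMatrix ℤ Gcex *ᵥ zvec) x : ℤ) : ℝ) from by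
    push_cast; rfl]
  rw [quad_int]
  norm_num

open Matrix in
lemma norm_val : xvec ⬝ᵥ xvec = 99 := by
  simp only [dotProduct, xvec]
  rw [show (∑ x : Fin 12, ((zvec x : ℤ) : ℝ) * ((zvec x : ℤ) : ℝ))
      = ((∑ x : Fin 12, zvec x * zvec x : ℤ) : ℝ) from by push_cast; rfl]
  rw [norm_int]
  norm_num

lemma gcex_spec : (625/99 : ℝ) ≤ lapSpecRad Gcex := by
  unfold lapSpecRad
  rw [div_le_iff₀ (by norm_num : (0:ℝ) < 99)]
  have h := rayleigh_le_iSup_aux59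
    (letI := Classical.decRel Gcex.Adj;
      (SimpleGraph.posSemidef_lapMatrix ℝ Gcex).isHermitian) xvec
  rw [quad_val _, norm_val] at h
  exact h

lemma gcex_connected : Gcex.Connected := by
  rw [SimpleGraph.connected_iff]
  refine ⟨?_, ⟨0⟩⟩
  have r1 : Gcex.Reachable 0 1 := (by decide : Gcex.Adj 0 1).reachable
  have r5 : Gcex.Reachable 0 5 := (by decide : Gcex.Adj 0 5).reachable
  have r11 : Gcex.Reachable 0 11 := (by decide : Gcex.Adj 0 11).reachable
  have r4 : Gcex.Reachable 0 4 := r1.trans (by decide : Gcex.Adj 1 4).reachable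
  have r8 : Gcex.Reachable 0 8 := r1.trans (by decide : Gcex.Adj 1 8).reachable
  have r6 : Gcex.Reachable 0 6 := r4.trans (by decide : Gcex.Adj 4 6).reachable
  have r7 : Gcex.Reachable 0 7 := r4.trans (by decide : Gcex.Adj 4 7).reachable
  have r2 : Gcex.Reachable 0 2 := r6.trans (by decide : Gcex.Adj 6 2).reachable
  have r9 : Gcex.Reachable 0 9 := r2.trans (by decide : Gcex.Adj 2 9).reachable
  have r3 : Gcex.Reachable 0 3 := r7.trans (by decide : Gcex.Adj 7 3).reachable
  have r10 : Gcex.Reachable 0 10 := r3.trans (by decide : Gcex.Adj 3 10).reachable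
  have r0 : Gcex.Reachable 0 0 := SimpleGraph.Reachable.refl 0
  have hall : ∀ v : Fin 12, Gcex.Reachable 0 v := by
    intro v
    fin_cases v <;> assumption
  intro u v
  exact (hall u).symm.trans (hall v)

/-- There exists a finite simple connected graph `G` with at least two vertices whose
Laplacian spectral radius exceeds the conjectured edge-maximum bound. -/
theorem exists_counterexample_bound59 :
    ∃ (V : Type) (_ : Fintype V) (_ : DecidableEq V) (_ : Nonempty V)
      (G : SimpleGraph V), G.Connected ∧ 2 ≤ Fintype.card V ∧
      ∀ i j : V, G.Adj i j →
        (fun di mi dj mj => (2 * (mi ^ 2 + mi * mj + mj ^ 2) - (di ^ 2 + dj ^ 2)) / (mi + mj))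
          (degR G i) (avgDegR G i) (degR G j) (avgDegR G j) < lapSpecRad G := by
  refine ⟨Fin 12, inferInstance, inferInstance, inferInstance, Gcex, gcex_connected, by simp, ?_⟩
  intro i j hij
  refine lt_of_lt_of_le ?_ gcex_spec
  simp only [degR_val, avgDegR_val]
  set a : ℝ := (sN i : ℝ) with ha'
  set b : ℝ := (dN i : ℝ) with hb'
  set c : ℝ := (sN j : ℝ) with hc'
  set d : ℝ := (dN j : ℝ) with hd'
  have ha : 0 < a := by rw [ha']; exact_mod_cast sN_pos i
  have hb : 0 < b := by rw [hb']; exact_mod_cast dN_pos i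
  have hc : 0 < c := by rw [hc']; exact_mod_cast sN_pos j
  have hd : 0 < d := by rw [hd']; exact_mod_cast dN_pos j
  have h1 : 0 < a / b + c / d := by positivity
  have hDpos : (0:ℝ) < (a * d + c * b) * b * d := by positivity
  have hR : 99 * (2 * (a^2 * d^2 + a * c * b * d + c^2 * b^2) - (b^2 + d^2) * b^2 * d^2)
      < 625 * ((a * d + c * b) * b * d) := by
    have hz := bnd_lt i j hij
    simp only [bndN, bndD] at hz
    rw [ha', hb', hc', hd']
    exact_mod_cast hz
  have heq : (2 * ((a/b)^2 + (a/b) * (c/d) + (c/d)^2) - (b^2 + d^2)) / (a/b + c/d)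
      = (2 * (a^2 * d^2 + a * c * b * d + c^2 * b^2) - (b^2 + d^2) * b^2 * d^2)
        / ((a * d + c * b) * b * d) := by
    rw [div_eq_div_iff h1.ne' hDpos.ne']
    field_simp
  rw [heq, div_lt_div_iff₀ hDpos (by norm_num : (0:ℝ) < 99)]
  linarith [hR]

end
end

section
/- There exists a finite simple connected graph G with at least two vertices such that μ(G) > max over all pairs of adjacent vertices v_i ~ v_j of G of m_i·m_j·(d_i + d_j)/(d_i·d_j). (This disproves conjectured edge-maximum bound 64 of Brankov, Hansen and Stevanović.) -/
noncomputable section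

open Finset

open Matrix

lemma rayleigh_le_iSup_eigenvalues {n : Type*} [Fintype n] [DecidableEq n] [Nonempty n]
    {A : Matrix n n ℝ} (hA : A.IsHermitian) (x : n → ℝ) :
    dotProduct x (A *ᵥ x) ≤ (⨆ i, hA.eigenvalues i) * dotProduct x x := by
  set c := ⨆ i, hA.eigenvalues i with hc
  set U : Matrix n n ℝ := (hA.eigenvectorUnitary : Matrix n n ℝ) with hUdef
  have hstar : star U = Uᵀ := by
    rw [Matrix.star_eq_conjTranspose, Matrix.conjTranspose_eq_transpose_of_trivial]
  set y : n → ℝ := Uᵀ *ᵥ x with hy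
  have hxU : x ᵥ* U = y := by rw [hy, ← Matrix.vecMul_transpose, Matrix.transpose_transpose]
  have hUU : U * star U = 1 := Matrix.mem_unitaryGroup_iff.mp hA.eigenvectorUnitary.2
  have hdiag : (RCLike.ofReal ∘ hA.eigenvalues : n → ℝ) = hA.eigenvalues := rfl
  have h1 : dotProduct x (A *ᵥ x)
      = dotProduct y ((Matrix.diagonal hA.eigenvalues) *ᵥ y) := by
    conv_lhs => rw [hA.spectral_theorem, Unitary.conjStarAlgAut_apply]
    rw [hdiag, ← hUdef, hstar]
    rw [← Matrix.mulVec_mulVec, ← Matrix.mulVec_mulVec, dotProduct_mulVec, hxU, ← hy]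
  have h2 : dotProduct x x = dotProduct y y := by
    have hx : U *ᵥ y = x := by
      rw [hy, Matrix.mulVec_mulVec, ← hstar, hUU, Matrix.one_mulVec]
    calc dotProduct x x = dotProduct x (U *ᵥ y) := by rw [hx]
      _ = dotProduct (x ᵥ* U) y := dotProduct_mulVec _ _ _
      _ = dotProduct y y := by rw [hxU]
  rw [h1, h2]
  rw [dotProduct, dotProduct, Finset.mul_sum]
  apply Finset.sum_le_sum
  intro i _
  rw [Matrix.mulVec_diagonal]
  have hle : hA.eigenvalues i ≤ c :=
    le_ciSup (Set.Finite.bddAbove (Set.finite_range hA.eigenvalues)) i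
  have h0 : 0 ≤ y i * y i := mul_self_nonneg _
  calc y i * (hA.eigenvalues i * y i) = hA.eigenvalues i * (y i * y i) := by ring
    _ ≤ c * (y i * y i) := mul_le_mul_of_nonneg_right hle h0

def elist : List (Fin 10 × Fin 10) :=
  [(0,6),(0,9),(1,2),(1,4),(1,7),(1,8),(2,3),(2,9),(3,4),(3,7),(3,8),(4,9),(5,6),(5,7),(5,8)]

def Gc : SimpleGraph (Fin 10) where
  Adj i j := (i, j) ∈ elist ∨ (j, i) ∈ elist
  symm := by constructor; intro i j h; exact h.symm
  loopless := by
    have h : ∀ i : Fin 10, ¬((i, i) ∈ elist ∨ (i, i) ∈ elist) := by decide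
    exact ⟨fun i hi => h i hi⟩

instance GcDec : DecidableRel Gc.Adj := fun i j =>
  inferInstanceAs (Decidable ((i, j) ∈ elist ∨ (j, i) ∈ elist))

lemma adjR (i j : Fin 10) (h : (i, j) ∈ elist ∨ (j, i) ∈ elist) : Gc.Reachable i j :=
  SimpleGraph.Adj.reachable h

lemma Gc_conn : Gc.Connected := by
  rw [SimpleGraph.connected_iff]
  refine ⟨?_, ⟨0⟩⟩
  have h0 : ∀ v : Fin 10, Gc.Reachable 0 v := by
    have r6 := adjR 0 6 (by decide)
    have r9 := adjR 0 9 (by decide)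
    have r2 := r9.trans (adjR 9 2 (by decide))
    have r1 := r2.trans (adjR 2 1 (by decide))
    have r3 := r2.trans (adjR 2 3 (by decide))
    have r4 := r1.trans (adjR 1 4 (by decide))
    have r7 := r1.trans (adjR 1 7 (by decide))
    have r8 := r1.trans (adjR 1 8 (by decide))
    have r5 := r6.trans (adjR 6 5 (by decide))
    intro v
    fin_cases v
    exacts [SimpleGraph.Reachable.refl 0, r1, r2, r3, r4, r5, r6, r7, r8, r9]
  exact fun u v => (h0 u).symm.trans (h0 v)

lemma Gc_degree : ∀ v, Gc.degree v = ![2,4,3,4,3,3,2,3,3,3] v := by decide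

lemma Gc_degsum : ∀ v, (∑ u ∈ Gc.neighborFinset v, Gc.degree u)
    = ![5,12,11,12,11,8,5,11,11,8] v := by decide

lemma degR_eq (v : Fin 10) : degR Gc v = (Gc.degree v : ℝ) := by
  unfold degR
  congr!

lemma avgDegR_eq (v : Fin 10) :
    avgDegR Gc v = ((∑ u ∈ Gc.neighborFinset v, Gc.degree u : ℕ) : ℝ) / (Gc.degree v : ℝ) := by
  unfold avgDegR
  rw [Nat.cast_sum]
  congr!

lemma degR_val_s16 : ∀ v, degR Gc v = ![2,4,3,4,3,3,2,3,3,3] v := by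
  intro v
  rw [degR_eq, Gc_degree]
  fin_cases v <;> norm_num

lemma avgDegR_val_s16 : ∀ v, avgDegR Gc v =
    ![5/2,3,11/3,3,11/3,8/3,5/2,11/3,11/3,8/3] v := by
  intro v
  rw [avgDegR_eq, Gc_degsum, Gc_degree]
  fin_cases v <;> norm_num

noncomputable def xv : Fin 10 → ℝ := ![1,-15,10,-15,10,-6,1,10,10,-6]

lemma quad_val_s16 : dotProduct xv (Gc.lapMatrix ℝ *ᵥ xv) = 6122 := by
  rw [← Matrix.toLinearMap₂'_apply', SimpleGraph.lapMatrix_toLinearMap₂']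
  simp (config := { decide := true }) only [Fin.sum_univ_succ, Fin.sum_univ_zero, if_true,
    if_false]
  simp only [xv, Matrix.cons_val_succ, Matrix.cons_val_zero]
  norm_num [xv]

lemma xx_val : dotProduct xv xv = 924 := by
  simp only [dotProduct, Fin.sum_univ_succ, Fin.sum_univ_zero, xv,
    Matrix.cons_val_succ, Matrix.cons_val_zero]
  norm_num

lemma key : (176 : ℝ)/27 < lapSpecRad Gc := by
  unfold lapSpecRad
  have hL : (letI := Classical.decRel Gc.Adj; Gc.lapMatrix ℝ) = Gc.lapMatrix ℝ := by
    congr!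
  have hq : dotProduct xv ((letI := Classical.decRel Gc.Adj; Gc.lapMatrix ℝ) *ᵥ xv)
      = 6122 := by rw [hL, quad_val_s16]
  have h := rayleigh_le_iSup_eigenvalues
    (letI := Classical.decRel Gc.Adj; (SimpleGraph.posSemidef_lapMatrix ℝ Gc).isHermitian) xv
  rw [hq, xx_val] at h
  set c := (letI := Classical.decRel Gc.Adj;
    ⨆ i, (SimpleGraph.posSemidef_lapMatrix ℝ Gc).isHermitian.eigenvalues i)
  linarith

/-- There exists a finite simple connected graph `G` with at least two vertices whose
Laplacian spectral radius exceeds the conjectured edge-maximum bound. -/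
theorem exists_counterexample_bound64 :
    ∃ (V : Type) (_ : Fintype V) (_ : DecidableEq V) (_ : Nonempty V)
      (G : SimpleGraph V), G.Connected ∧ 2 ≤ Fintype.card V ∧
      ∀ i j : V, G.Adj i j →
        (fun di mi dj mj => mi * mj * (di + dj) / (di * dj))
          (degR G i) (avgDegR G i) (degR G j) (avgDegR G j) < lapSpecRad G := by
  refine ⟨Fin 10, inferInstance, inferInstance, inferInstance, Gc, Gc_conn, by norm_num, ?_⟩
  intro i j hij
  show avgDegR Gc i * avgDegR Gc j * (degR Gc i + degR Gc j) / (degR Gc i * degR Gc j)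
      < lapSpecRad Gc
  rw [degR_val_s16, degR_val_s16, avgDegR_val_s16, avgDegR_val_s16]
  refine lt_of_le_of_lt ?_ key
  fin_cases i <;> fin_cases j <;>
    first
      | exact absurd hij (by decide)
      | norm_num
end
end
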